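/- arXiv:quant-ph/0009091 — 2 statements merged into one kernel-verified Lean document; each statement's English description precedes it below -/
import Mathlib

section
/- For all square-summable nonnegative real sequences (a_i), ∑_{d≥1} (1/d) ∑_{i=1}^{d} a_i a_{d−i+1} ≤ π ∑_{i≥1} a_i². -/
open Real Set

lemma arctan_aux (u : ℝ) (hu : 0 ≤ u) : u / (1 + u ^ 2) ≤ Real.arctan u := by
  have key : ∀ x : ℝ, HasDerivAt (fun y => Real.arctan y - y / (1 + y ^ 2))
      (1 / (1 + x ^ 2) - (1 - x ^ 2) / (1 + x ^ 2) ^ 2) x := by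
    intro x
    have h1 : (0:ℝ) < 1 + x ^ 2 := by positivity
    have hd : HasDerivAt (fun y : ℝ => y / (1 + y ^ 2))
        ((1 * (1 + x ^ 2) - x * (2 * x)) / (1 + x ^ 2) ^ 2) x := by
      have := (hasDerivAt_id x).div
        (((hasDerivAt_pow 2 x).const_add 1)) h1.ne'
      simp at this ⊢; exact this
    have hd' : HasDerivAt (fun y : ℝ => y / (1 + y ^ 2))
        ((1 - x ^ 2) / (1 + x ^ 2) ^ 2) x := by
      convert hd using 1; ring
    exact (Real.hasDerivAt_arctan x).sub hd'
  have mono : MonotoneOn (fun y => Real.arctan y - y / (1 + y ^ 2)) (Set.Ici (0:ℝ)) := by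
    apply monotoneOn_of_deriv_nonneg (convex_Ici 0)
    · intro x _
      exact ((key x).differentiableAt).continuousAt.continuousWithinAt
    · intro x _
      exact ((key x).differentiableAt).differentiableWithinAt
    · intro x hx
      rw [(key x).deriv]
      have h1 : (0:ℝ) < 1 + x ^ 2 := by positivity
      rw [div_sub_div _ _ h1.ne' (by positivity : ((1 + x^2)^2:ℝ) ≠ 0)]
      apply div_nonneg _ (by positivity)
      nlinarith [sq_nonneg x]
  have := mono (Set.self_mem_Ici) (Set.mem_Ici.2 hu) hu
  simp only [Real.arctan_zero, zero_div, sub_zero] at this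
  linarith [this]

noncomputable def hh (α x : ℝ) : ℝ := Real.sqrt α / (Real.sqrt x * (α + x))

lemma hh_nonneg (α x : ℝ) (hα : 0 < α) (hx : 0 ≤ x) : 0 ≤ hh α x := by
  unfold hh
  apply div_nonneg (Real.sqrt_nonneg _)
  positivity

lemma hh_hasDerivAt (α : ℝ) (hα : 0 < α) (x : ℝ) (hx : 0 < x) :
    HasDerivAt (fun y => 2 * Real.arctan (Real.sqrt (y / α))) (hh α x) x := by
  have h1 : HasDerivAt (fun y : ℝ => y / α) (1 / α) x := by
    simpa [one_div] using (hasDerivAt_id x).div_const α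
  have h2 : HasDerivAt (fun y : ℝ => Real.sqrt (y / α))
      (1 / (2 * Real.sqrt (x / α)) * (1 / α)) x :=
    (Real.hasDerivAt_sqrt (by positivity)).comp x h1
  have h3 := (Real.hasDerivAt_arctan (Real.sqrt (x / α))).comp x h2
  have h4 := h3.const_mul (2 : ℝ)
  refine h4.congr_deriv (Eq.symm ?_)
  have hs : Real.sqrt (x / α) ^ 2 = x / α := Real.sq_sqrt (by positivity)
  have hax : (0:ℝ) < Real.sqrt α := Real.sqrt_pos.2 hα
  have hxx : (0:ℝ) < Real.sqrt x := Real.sqrt_pos.2 hx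
  have hsq : Real.sqrt x * Real.sqrt x = x := Real.mul_self_sqrt hx.le
  have hsqa : Real.sqrt α * Real.sqrt α = α := Real.mul_self_sqrt hα.le
  rw [hs, Real.sqrt_div hx.le]
  unfold hh
  have hax' : (0:ℝ) < α + x := by linarith
  field_simp

lemma hh_antitoneOn (α : ℝ) (hα : 0 < α) (c : ℝ) :
    AntitoneOn (hh α) (Icc (1/2 : ℝ) c) := by
  intro x hx y hy hxy
  unfold hh
  have hx0 : (0:ℝ) < x := lt_of_lt_of_le (by norm_num) hx.1
  have hy0 : (0:ℝ) < y := lt_of_lt_of_le (by norm_num) hy.1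
  apply div_le_div_of_nonneg_left (Real.sqrt_nonneg _)
  · positivity
  · apply mul_le_mul (Real.sqrt_le_sqrt hxy) (by linarith) (by positivity)
      (Real.sqrt_nonneg _)

lemma hh_continuousOn (α : ℝ) (hα : 0 < α) :
    ContinuousOn (hh α) (Ici (1/2 : ℝ)) := by
  unfold hh
  apply ContinuousOn.div continuousOn_const
  · exact (Real.continuous_sqrt.continuousOn).mul (by fun_prop)
  · intro x hx
    have hx0 : (0:ℝ) < x := lt_of_lt_of_le (by norm_num) hx
    have : (0:ℝ) < Real.sqrt x := Real.sqrt_pos.2 hx0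
    positivity

lemma hh_integral (α : ℝ) (hα : 0 < α) (c : ℝ) (hc : (1/2:ℝ) ≤ c) :
    ∫ x in (1/2 : ℝ)..c, hh α x
      = 2 * Real.arctan (Real.sqrt (c / α)) - 2 * Real.arctan (Real.sqrt ((1/2) / α)) := by
  apply intervalIntegral.integral_eq_sub_of_hasDerivAt
  · intro x hx
    rw [uIcc_of_le hc] at hx
    exact hh_hasDerivAt α hα x (lt_of_lt_of_le (by norm_num) hx.1)
  · apply ContinuousOn.intervalIntegrable
    apply (hh_continuousOn α hα).mono
    rw [uIcc_of_le hc]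
    exact Icc_subset_Ici_self

lemma hh_half (α : ℝ) (hα : 0 < α) :
    hh α (1/2) ≤ 2 * Real.arctan (Real.sqrt ((1/2) / α)) := by
  set u := Real.sqrt ((1/2) / α) with hu
  have hu0 : 0 < u := Real.sqrt_pos.2 (by positivity)
  have hu2 : u ^ 2 = (1/2) / α := Real.sq_sqrt (by positivity)
  have key := arctan_aux u hu0.le
  have heq : hh α (1/2) = 2 * (u / (1 + u ^ 2)) := by
    unfold hh
    rw [hu2]
    rw [hu, Real.sqrt_div (by norm_num : (0:ℝ) ≤ (1/2:ℝ))]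
    have hax : (0:ℝ) < Real.sqrt α := Real.sqrt_pos.2 hα
    have h2 : (0:ℝ) < Real.sqrt (1/2) := Real.sqrt_pos.2 (by norm_num)
    have hsq2 : Real.sqrt (1/2) * Real.sqrt (1/2) = 1/2 := Real.mul_self_sqrt (by norm_num)
    have hsqa : Real.sqrt α * Real.sqrt α = α := Real.mul_self_sqrt hα.le
    field_simp
    ring_nf
    rw [Real.sq_sqrt hα.le, Real.sq_sqrt (show (0:ℝ) ≤ 1/2 by norm_num)]
    ring
  rw [heq]
  linarith

lemma hh_row_bound (α : ℝ) (hα : 0 < α) :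
    (Summable fun n : ℕ => hh α ((n : ℝ) + 1/2)) ∧
      (∑' n : ℕ, hh α ((n : ℝ) + 1/2)) ≤ Real.pi := by
  have hnonneg : ∀ n : ℕ, 0 ≤ hh α ((n : ℝ) + 1/2) :=
    fun n => hh_nonneg α _ hα (by positivity)
  have hpartial : ∀ N : ℕ, ∑ n ∈ Finset.range N, hh α ((n : ℝ) + 1/2) ≤ Real.pi := by
    intro N
    cases N with
    | zero => simp [Real.pi_pos.le]
    | succ M =>
      rw [Finset.sum_range_succ']
      have hsum1 : ∑ i ∈ Finset.range M, hh α (((i+1 : ℕ) : ℝ) + 1/2)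
          ≤ ∫ x in (1/2 : ℝ)..(1/2 + M), hh α x := by
        have := AntitoneOn.sum_le_integral (x₀ := (1/2:ℝ)) (a := M) (f := hh α)
          (hh_antitoneOn α hα _)
        refine le_trans (le_of_eq ?_) this
        apply Finset.sum_congr rfl
        intro i _
        push_cast
        ring_nf
      have hint : ∫ x in (1/2 : ℝ)..(1/2 + M), hh α x
          = 2 * Real.arctan (Real.sqrt ((1/2 + M) / α))
            - 2 * Real.arctan (Real.sqrt ((1/2) / α)) :=
        hh_integral α hα _ (le_add_of_nonneg_right (Nat.cast_nonneg M))
      have harct : 2 * Real.arctan (Real.sqrt ((1/2 + (M:ℝ)) / α)) ≤ Real.pi := by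
        have := Real.arctan_lt_pi_div_two (Real.sqrt ((1/2 + (M:ℝ)) / α))
        linarith
      have h0 : hh α ((0 : ℕ) + 1/2 : ℝ) ≤ 2 * Real.arctan (Real.sqrt ((1/2) / α)) := by
        simpa using hh_half α hα
      calc ∑ i ∈ Finset.range M, hh α (((i+1 : ℕ) : ℝ) + 1/2) + hh α (((0:ℕ):ℝ) + 1/2)
          ≤ (2 * Real.arctan (Real.sqrt ((1/2 + M) / α))
              - 2 * Real.arctan (Real.sqrt ((1/2) / α)))
            + 2 * Real.arctan (Real.sqrt ((1/2) / α)) := by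
            rw [← hint]; exact add_le_add hsum1 h0
        _ ≤ Real.pi := by linarith [harct]
  have hsummable : Summable fun n : ℕ => hh α ((n : ℝ) + 1/2) :=
    summable_of_sum_range_le hnonneg hpartial
  exact ⟨hsummable, Real.tsum_le_of_sum_range_le hnonneg hpartial⟩

lemma summable_antidiag (F : ℕ × ℕ → ℝ) (h : Summable F) :
    Summable fun n => ∑ kl ∈ Finset.HasAntidiagonal.antidiagonal n, F kl := by
  have h' : Summable (F ∘ Finset.HasAntidiagonal.sigmaAntidiagonalEquivProd) :=
    (Equiv.summable_iff _).2 h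
  conv => congr; ext n; rw [← Finset.sum_finset_coe, ← tsum_fintype (L := SummationFilter.unconditional _)]
  exact h'.sigma' fun n ↦ (hasSum_fintype _).summable

lemma tsum_antidiag (F : ℕ × ℕ → ℝ) (h : Summable F) :
    ∑' n, ∑ kl ∈ Finset.HasAntidiagonal.antidiagonal n, F kl = ∑' p : ℕ × ℕ, F p := by
  have h' : Summable (F ∘ Finset.HasAntidiagonal.sigmaAntidiagonalEquivProd) :=
    (Equiv.summable_iff _).2 h
  conv_lhs => congr; ext n; rw [← Finset.sum_finset_coe, ← tsum_fintype (L := SummationFilter.unconditional _)]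
  rw [← Finset.HasAntidiagonal.sigmaAntidiagonalEquivProd.tsum_eq F]
  exact (Summable.tsum_sigma' (fun n ↦ (hasSum_fintype _).summable) h').symm

lemma amgm_aux (x y t : ℝ) (ht : 0 < t) : 2 * x * y ≤ x ^ 2 * t + y ^ 2 / t := by
  have h : 0 ≤ (x * t - y) ^ 2 / t := div_nonneg (sq_nonneg _) ht.le
  have e : (x * t - y) ^ 2 / t = x ^ 2 * t - 2 * x * y + y ^ 2 / t := by
    field_simp; ring
  linarith [e ▸ h]

set_option maxHeartbeats 1000000 in
/-- Hilbert's inequality in quadratic form: for a square-summable nonnegative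
sequence `a` (indexed from `0`, so `a i` stands for `a_{i+1}`),
`∑_{d≥1} (1/d) ∑_{i=1}^d a_i a_{d-i+1} ≤ π ∑_i a_i²`. -/
theorem hilbert_quadratic_form_bound (a : ℕ → ℝ) (ha : ∀ i, 0 ≤ a i)
    (hsum : Summable fun i => a i ^ 2) :
    ∑' d : ℕ, (1 / ((d : ℝ) + 1)) * ∑ i ∈ Finset.range (d + 1), a i * a (d - i)
      ≤ Real.pi * ∑' i : ℕ, a i ^ 2 := by
  set w : ℕ → ℕ → ℝ := fun m n => hh ((m : ℝ) + 1/2) ((n : ℝ) + 1/2) with hw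
  have hw_nonneg : ∀ m n, 0 ≤ w m n := fun m n =>
    hh_nonneg _ _ (by positivity) (by positivity)
  have hrow : ∀ m : ℕ, Summable (fun n => w m n) ∧ (∑' n, w m n) ≤ Real.pi :=
    fun m => hh_row_bound ((m : ℝ) + 1/2) (by positivity)
  set F : ℕ × ℕ → ℝ := fun p => a p.1 ^ 2 * w p.1 p.2 with hF
  have hFnn : ∀ p, 0 ≤ F p := fun p => mul_nonneg (sq_nonneg _) (hw_nonneg _ _)
  have hFrows : ∀ m, Summable fun n => F (m, n) := by
    intro m
    have e : (fun n => F (m, n)) = fun n => a m ^ 2 * w m n := rfl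
    rw [e]
    exact (hrow m).1.mul_left _
  have hrowsum : ∀ m, ∑' n, F (m, n) ≤ Real.pi * a m ^ 2 := by
    intro m
    rw [show (fun n => F (m, n)) = fun n => a m ^ 2 * w m n from rfl, tsum_mul_left]
    rw [mul_comm Real.pi]
    exact mul_le_mul_of_nonneg_left (hrow m).2 (sq_nonneg _)
  have hrowsum_nn : ∀ m, 0 ≤ ∑' n, F (m, n) := fun m =>
    tsum_nonneg fun n => hFnn (m, n)
  have hrowsum_summable : Summable fun m => ∑' n, F (m, n) :=
    Summable.of_nonneg_of_le hrowsum_nn hrowsum (hsum.mul_left Real.pi)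
  have hFsum : Summable F :=
    (summable_prod_of_nonneg hFnn).2 ⟨hFrows, hrowsum_summable⟩
  have htsumF : ∑' p : ℕ × ℕ, F p ≤ Real.pi * ∑' i, a i ^ 2 := by
    rw [Summable.tsum_prod' hFsum hFrows]
    calc ∑' m, ∑' n, F (m, n) ≤ ∑' m, Real.pi * a m ^ 2 :=
          Summable.tsum_le_tsum hrowsum hrowsum_summable (hsum.mul_left Real.pi)
      _ = Real.pi * ∑' i, a i ^ 2 := tsum_mul_left
  -- symmetrized version
  have hFswap : Summable fun p : ℕ × ℕ => F p.swap := hFsum.prod_symm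
  have htsum_swap : ∑' p : ℕ × ℕ, F p.swap = ∑' p : ℕ × ℕ, F p :=
    (Equiv.prodComm ℕ ℕ).tsum_eq F
  set Fsym : ℕ × ℕ → ℝ := fun p => (F p + F p.swap) / 2 with hFsymdef
  have hFsymsum : Summable Fsym := (hFsum.add hFswap).div_const 2
  have htsumFsym : ∑' p : ℕ × ℕ, Fsym p = ∑' p : ℕ × ℕ, F p := by
    rw [hFsymdef]
    rw [tsum_div_const, Summable.tsum_add hFsum hFswap, htsum_swap]
    ring
  set G : ℕ → ℝ := fun d => ∑ kl ∈ Finset.HasAntidiagonal.antidiagonal d, Fsym kl with hG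
  have hGsum : Summable G := summable_antidiag Fsym hFsymsum
  have htsumG : ∑' d, G d = ∑' p : ℕ × ℕ, Fsym p := tsum_antidiag Fsym hFsymsum
  -- termwise bound
  have hterm : ∀ d : ℕ,
      (1 / ((d : ℝ) + 1)) * ∑ i ∈ Finset.range (d + 1), a i * a (d - i) ≤ G d := by
    intro d
    show _ ≤ ∑ kl ∈ Finset.HasAntidiagonal.antidiagonal d, Fsym kl
    rw [Finset.Nat.sum_antidiagonal_eq_sum_range_succ_mk]
    rw [Finset.mul_sum]
    apply Finset.sum_le_sum
    intro i hi
    have hid : i ≤ d := Nat.lt_succ_iff.1 (Finset.mem_range.1 hi)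
    set m := i
    set n := d - i with hn
    have hmn : (m : ℝ) + (n : ℝ) = (d : ℝ) := by
      rw [hn, Nat.cast_sub (show i ≤ d from hid)]; simp [m]
    have hd1 : ((d : ℝ) + 1) = ((m : ℝ) + 1/2) + ((n : ℝ) + 1/2) := by
      rw [← hmn]; ring
    set α := (m : ℝ) + 1/2 with hα
    set β := (n : ℝ) + 1/2 with hβ
    have hα0 : 0 < α := by positivity
    have hβ0 : 0 < β := by positivity
    have hsα : 0 < Real.sqrt α := Real.sqrt_pos.2 hα0
    have hsβ : 0 < Real.sqrt β := Real.sqrt_pos.2 hβ0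
    have hs : 0 < α + β := by positivity
    have hwmn : w m n = Real.sqrt α / (Real.sqrt β * (α + β)) := rfl
    have hwnm : w n m = Real.sqrt β / (Real.sqrt α * (β + α)) := rfl
    have h2 : 2 * a m * a n ≤ a m ^ 2 * (Real.sqrt α / Real.sqrt β)
        + a n ^ 2 / (Real.sqrt α / Real.sqrt β) :=
      amgm_aux _ _ _ (by positivity)
    show 1 / ((d : ℝ) + 1) * (a m * a n) ≤ (F (m, n) + F (m, n).swap) / 2
    have hFmn : F (m, n) = a m ^ 2 * w m n := rfl
    have hFnm : F (m, n).swap = a n ^ 2 * w n m := rfl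
    rw [hFmn, hFnm, hwmn, hwnm, hd1]
    have e1 : 1 / (α + β) * (a m * a n) = (2 * a m * a n) / (2 * (α + β)) := by
      field_simp
    have e2 : (a m ^ 2 * (Real.sqrt α / (Real.sqrt β * (α + β)))
        + a n ^ 2 * (Real.sqrt β / (Real.sqrt α * (β + α)))) / 2
        = (a m ^ 2 * (Real.sqrt α / Real.sqrt β)
            + a n ^ 2 / (Real.sqrt α / Real.sqrt β)) / (2 * (α + β)) := by
      field_simp; ring
    rw [e1, e2]
    exact (div_le_div_iff_of_pos_right (by positivity)).2 h2
  -- conclude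
  have hlhs_nn : ∀ d : ℕ,
      0 ≤ (1 / ((d : ℝ) + 1)) * ∑ i ∈ Finset.range (d + 1), a i * a (d - i) := by
    intro d
    apply mul_nonneg (by positivity)
    exact Finset.sum_nonneg fun i _ => mul_nonneg (ha i) (ha _)
  have hlhs_sum : Summable fun d : ℕ =>
      (1 / ((d : ℝ) + 1)) * ∑ i ∈ Finset.range (d + 1), a i * a (d - i) :=
    Summable.of_nonneg_of_le hlhs_nn hterm hGsum
  calc ∑' d : ℕ, (1 / ((d : ℝ) + 1)) * ∑ i ∈ Finset.range (d + 1), a i * a (d - i)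
      ≤ ∑' d, G d := Summable.tsum_le_tsum hterm hlhs_sum hGsum
    _ = ∑' p : ℕ × ℕ, Fsym p := htsumG
    _ = ∑' p : ℕ × ℕ, F p := htsumFsym
    _ ≤ Real.pi * ∑' i, a i ^ 2 := htsumF
end

section
/- With σ and τ = σ^{(k,d)} as above, for each 1 ≤ i ≤ d the unordered pair {σ⁻¹(k), σ⁻¹(k+i)} equals {τ⁻¹(k+d), τ⁻¹(k+i−1)}. -/
/-- The element of `Fin n` with value `m` (given via `m % n`; when `m < n` this is just `m`). -/
def mkFin (n m : ℕ) (h : 0 < n) : Fin n := ⟨m % n, Nat.mod_lt _ h⟩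

theorem differing_pairs_reindex (n : ℕ) (hn : 2 ≤ n)
    (σ τ : Equiv.Perm (Fin n)) (k d : ℕ)
    (hk : k ≤ n - 2) (hd1 : 1 ≤ d) (hd2 : d ≤ n - k - 1)
    (hτ : ∀ x : Fin n, (τ x : ℕ) =
      if (σ x : ℕ) = k then k + d
      else if k + 1 ≤ (σ x : ℕ) ∧ (σ x : ℕ) ≤ k + d then (σ x : ℕ) - 1
      else (σ x : ℕ)) :
    ∀ m, 1 ≤ m → m ≤ d →
      ({σ⁻¹ (mkFin n k (by omega)), σ⁻¹ (mkFin n (k + m) (by omega))} : Set (Fin n))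
        = {τ⁻¹ (mkFin n (k + d) (by omega)), τ⁻¹ (mkFin n (k + m - 1) (by omega))} := by
  intro m hm1 hm2
  have hkd : k + d < n := by omega
  have h1 : τ⁻¹ (mkFin n (k + d) (by omega)) = σ⁻¹ (mkFin n k (by omega)) := by
    rw [Equiv.Perm.inv_eq_iff_eq]
    have h := hτ (σ⁻¹ (mkFin n k (by omega)))
    rw [show σ (σ⁻¹ (mkFin n k (by omega))) = ⟨k % n, Nat.mod_lt _ (by omega)⟩ from σ.apply_symm_apply _] at h
    apply Fin.ext
    simp only [mkFin] at h ⊢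
    have e1 : k % n = k := Nat.mod_eq_of_lt (by omega)
    rw [if_pos e1] at h
    rw [Nat.mod_eq_of_lt hkd]
    exact h.symm
  have h2 : τ⁻¹ (mkFin n (k + m - 1) (by omega)) = σ⁻¹ (mkFin n (k + m) (by omega)) := by
    rw [Equiv.Perm.inv_eq_iff_eq]
    have h := hτ (σ⁻¹ (mkFin n (k + m) (by omega)))
    rw [show σ (σ⁻¹ (mkFin n (k + m) (by omega))) = ⟨(k + m) % n, Nat.mod_lt _ (by omega)⟩ from σ.apply_symm_apply _] at h
    apply Fin.ext
    simp only [mkFin] at h ⊢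
    have e3 : (k + m) % n = k + m := Nat.mod_eq_of_lt (by omega)
    rw [if_neg (by rw [e3]; omega), if_pos (by rw [e3]; exact ⟨by omega, by omega⟩)] at h
    rw [Nat.mod_eq_of_lt (show k + m - 1 < n by omega), h, e3]
  rw [h1, h2, Set.pair_comm]
end
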